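/- Let X ≥ 0 be a random variable and suppose P(X > μ + u) ≤ k e^{−u²/(2σ²)} for all u > 0, where μ, σ, k > 0. Then for every p ≥ 1, E[X^p] ≤ μ^p + p k √(2π) σ E[|Z|^{p−1}], where Z is Gaussian with mean μ and variance σ². -/

import Mathlib

open MeasureTheory ProbabilityTheory Real Set

lemma aux_even_int (b s : ℝ) (hb : 0 < b) (hs : 0 ≤ s) :
    Integrable (fun x : ℝ => |x| ^ s * Real.exp (-b * x ^ 2)) := by
  have hs' : (-1 : ℝ) < s := by linarith
  have h1 : IntegrableOn (fun x : ℝ => |x| ^ s * Real.exp (-b * x ^ 2)) (Ioi 0) := by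
    refine (integrableOn_rpow_mul_exp_neg_mul_sq hb hs').congr_fun ?_ measurableSet_Ioi
    intro x hx
    simp [abs_of_pos (mem_Ioi.mp hx)]
  have h2 : IntegrableOn (fun x : ℝ => |x| ^ s * Real.exp (-b * x ^ 2)) (Iio 0) := by
    have hemb : MeasurableEmbedding (fun x : ℝ => -x) :=
      (Homeomorph.neg ℝ).measurableEmbedding
    have hmap : (volume.restrict (Ioi (0:ℝ))).map (fun x : ℝ => -x)
        = volume.restrict (Iio (0:ℝ)) := by
      rw [← Measure.map_neg_eq_self (volume : Measure ℝ)]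
      rw [Measure.restrict_map measurable_neg measurableSet_Iio]
      congr 1
      ext x; simp
    rw [IntegrableOn, ← hmap, hemb.integrable_map_iff]
    refine h1.congr_fun ?_ measurableSet_Ioi
    intro x hx
    simp [abs_of_pos (mem_Ioi.mp hx), Function.comp]
  have : (univ : Set ℝ) = Iio 0 ∪ Ici 0 := (Iio_union_Ici).symm
  rw [← integrableOn_univ, this]
  refine h2.union ?_
  rw [integrableOn_Ici_iff_integrableOn_Ioi]
  exact h1

lemma aux_shift_int (m σ s : ℝ) (hσ : 0 < σ) (hs : 0 ≤ s) :
    Integrable (fun x : ℝ => |x| ^ s * Real.exp (-(x - m) ^ 2 / (2 * σ ^ 2))) := by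
  set b : ℝ := (2 * σ ^ 2)⁻¹ with hbdef
  have hb : 0 < b := by positivity
  have key : ∀ y : ℝ, -y ^ 2 / (2 * σ ^ 2) = -b * y ^ 2 := by
    intro y; rw [hbdef, div_eq_mul_inv]; ring
  simp_rw [key]
  have hf : Integrable (fun y : ℝ => |y + m| ^ s * Real.exp (-b * y ^ 2)) := by
    refine Integrable.mono'
      ((aux_even_int b s hb hs).const_mul ((2:ℝ) ^ s)
        |>.add ((integrable_exp_neg_mul_sq hb).const_mul ((2:ℝ) ^ s * |m| ^ s))) ?_ ?_
    · refine Measurable.aestronglyMeasurable ?_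
      exact ((measurable_id.add_const m).abs.pow_const s).mul
        ((measurable_id.pow_const 2).const_mul (-b)).exp
    · refine Filter.Eventually.of_forall (fun x => ?_)
      have h0 : 0 ≤ Real.exp (-b * x ^ 2) := (Real.exp_pos _).le
      have h1 : |x + m| ^ s ≤ 2 ^ s * |x| ^ s + 2 ^ s * |m| ^ s := by
        have hle : |x + m| ≤ 2 * max |x| |m| :=
          (abs_add_le x m).trans (by
            have := le_max_left |x| |m|; have := le_max_right |x| |m|; nlinarith [abs_nonneg x, abs_nonneg m])
        calc |x + m| ^ s ≤ (2 * max |x| |m|) ^ s :=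
              Real.rpow_le_rpow (abs_nonneg _) hle hs
          _ = 2 ^ s * (max |x| |m|) ^ s := by
              rw [Real.mul_rpow (by norm_num) (le_max_iff.mpr (Or.inl (abs_nonneg _)))]
          _ ≤ 2 ^ s * (|x| ^ s + |m| ^ s) := by
              gcongr
              rcases max_cases |x| |m| with ⟨h, _⟩ | ⟨h, _⟩ <;> rw [h]
              · nlinarith [Real.rpow_nonneg (abs_nonneg m) s]
              · nlinarith [Real.rpow_nonneg (abs_nonneg x) s]
          _ = 2 ^ s * |x| ^ s + 2 ^ s * |m| ^ s := by ring
      have h2 : ‖|x + m| ^ s * Real.exp (-b * x ^ 2)‖ = |x + m| ^ s * Real.exp (-b * x ^ 2) := by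
        rw [norm_eq_abs, abs_of_nonneg (by positivity)]
      rw [h2]
      calc |x + m| ^ s * Real.exp (-b * x ^ 2)
          ≤ (2 ^ s * |x| ^ s + 2 ^ s * |m| ^ s) * Real.exp (-b * x ^ 2) := by gcongr
        _ = 2 ^ s * (|x| ^ s * Real.exp (-b * x ^ 2))
            + 2 ^ s * |m| ^ s * Real.exp (-b * x ^ 2) := by ring
  have h := hf.comp_sub_right m
  simpa using h

theorem moment_bound_of_gaussian_tail
    {Ω : Type*} [MeasurableSpace Ω] (P : Measure Ω) [IsProbabilityMeasure P]
    (X : Ω → ℝ) (hX : Measurable X) (hXpos : ∀ ω, 0 ≤ X ω)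
    (μ σ k : ℝ) (hμ : 0 < μ) (hσ : 0 < σ) (hk : 0 < k)
    (htail : ∀ u : ℝ, 0 < u →
      P {ω | μ + u < X ω} ≤ ENNReal.ofReal (k * Real.exp (-u ^ 2 / (2 * σ ^ 2))))
    (v : NNReal) (hv : (v : ℝ) = σ ^ 2) (p : ℝ) (hp : 1 ≤ p) :
    (∫ ω, X ω ^ p ∂P)
      ≤ μ ^ p + p * k * Real.sqrt (2 * Real.pi) * σ *
          ∫ z, |z| ^ (p - 1) ∂(gaussianReal μ v) := by
  have hp0 : 0 < p := lt_of_lt_of_le one_pos hp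
  have hs : 0 ≤ p - 1 := by linarith
  have hs' : (-1 : ℝ) < p - 1 := by linarith
  have hv0 : v ≠ 0 := by
    intro h; rw [h] at hv; simp at hv; nlinarith
  set s : ℝ := p - 1 with hsdef
  set G : ℝ := ∫ z, |z| ^ (p - 1) ∂(gaussianReal μ v) with hGdef
  have hG0 : 0 ≤ G := integral_nonneg fun z => Real.rpow_nonneg (abs_nonneg z) _
  set c : ℝ := Real.sqrt (2 * Real.pi) * σ with hcdef
  have hc : 0 < c := by positivity
  have hsqrt : Real.sqrt (2 * Real.pi * (v : ℝ)) = c := by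
    rw [hv, hcdef, show 2 * Real.pi * σ ^ 2 = (2 * Real.pi) * σ ^ 2 by ring,
      Real.sqrt_mul (by positivity), Real.sqrt_sq hσ.le]
  -- the gaussian integral as a volume integral
  have hGvol : (∫ t, Real.exp (-(t - μ) ^ 2 / (2 * σ ^ 2)) * |t| ^ s ∂(volume : Measure ℝ))
      = c * G := by
    have hgr : gaussianReal μ v
        = (volume : Measure ℝ).withDensity
          (fun x => ((Real.toNNReal (gaussianPDFReal μ v x) : NNReal) : ENNReal)) := by
      rw [gaussianReal_of_var_ne_zero _ hv0]; rfl
    have hG1 : G = ∫ x, (Real.toNNReal (gaussianPDFReal μ v x) : NNReal) • |x| ^ s ∂volume := by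
      rw [hGdef, hgr, integral_withDensity_eq_integral_smul
        ((measurable_gaussianPDFReal μ v).real_toNNReal) _]
    have hG2 : G = c⁻¹ * ∫ t, Real.exp (-(t - μ) ^ 2 / (2 * σ ^ 2)) * |t| ^ s ∂volume := by
      rw [hG1, ← integral_const_mul]
      refine integral_congr_ae (Filter.Eventually.of_forall fun x => ?_)
      show (gaussianPDFReal μ v x).toNNReal • |x| ^ s
          = c⁻¹ * (Real.exp (-(x - μ) ^ 2 / (2 * σ ^ 2)) * |x| ^ s)
      rw [NNReal.smul_def, Real.coe_toNNReal _ (gaussianPDFReal_nonneg μ v x)]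
      rw [gaussianPDFReal]
      rw [hsqrt, show (2 * (v : ℝ)) = 2 * σ ^ 2 by rw [hv], smul_eq_mul]
      ring
    rw [hG2]
    field_simp
  -- reduce to lintegral
  have hXp_nn : 0 ≤ᵐ[P] fun ω => X ω ^ p :=
    Filter.Eventually.of_forall fun ω => Real.rpow_nonneg (hXpos ω) p
  rw [integral_eq_lintegral_of_nonneg_ae hXp_nn
    ((show Measurable fun ω => X ω ^ p by fun_prop).aestronglyMeasurable)]
  have hRHS0 : 0 ≤ μ ^ p + p * k * Real.sqrt (2 * Real.pi) * σ * G := by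
    have := Real.rpow_nonneg hμ.le p
    have h2 : 0 ≤ p * k * Real.sqrt (2 * Real.pi) * σ * G := by positivity
    linarith
  refine ENNReal.toReal_le_of_le_ofReal hRHS0 ?_
  rw [MeasureTheory.lintegral_rpow_eq_lintegral_meas_lt_mul P
    (Filter.Eventually.of_forall hXpos) hX.aemeasurable hp0]
  have hsplit : (Ioi (0 : ℝ)) = Ioc 0 μ ∪ Ioi μ := (Ioc_union_Ioi_eq_Ioi hμ.le).symm
  rw [hsplit, lintegral_union measurableSet_Ioi Ioc_disjoint_Ioi_same]
  -- part 1
  have hint1 : IntegrableOn (fun t : ℝ => t ^ s) (Ioc 0 μ) :=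
    (intervalIntegral.intervalIntegrable_rpow' hs').1
  have hT1 : (∫⁻ t in Ioc 0 μ, P {a | t < X a} * ENNReal.ofReal (t ^ s))
      ≤ ENNReal.ofReal (μ ^ p / p) := by
    calc (∫⁻ t in Ioc 0 μ, P {a | t < X a} * ENNReal.ofReal (t ^ s))
        ≤ ∫⁻ t in Ioc 0 μ, ENNReal.ofReal (t ^ s) := by
          refine lintegral_mono fun t => ?_
          calc P {a | t < X a} * ENNReal.ofReal (t ^ s)
              ≤ 1 * ENNReal.ofReal (t ^ s) := mul_le_mul_left prob_le_one _
            _ = ENNReal.ofReal (t ^ s) := one_mul _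
      _ = ENNReal.ofReal (∫ t in Ioc 0 μ, t ^ s) := by
          rw [ofReal_integral_eq_lintegral_ofReal hint1 ?_]
          filter_upwards [self_mem_ae_restrict measurableSet_Ioc] with t ht
          exact Real.rpow_nonneg ht.1.le _
      _ = ENNReal.ofReal (μ ^ p / p) := by
          congr 1
          rw [← intervalIntegral.integral_of_le hμ.le, integral_rpow (Or.inl hs')]
          rw [Real.zero_rpow (by linarith : s + 1 ≠ 0)]
          norm_num [hsdef]
  -- part 2
  have hint2 : Integrable (fun t : ℝ =>
      k * (Real.exp (-(t - μ) ^ 2 / (2 * σ ^ 2)) * |t| ^ s)) := by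
    have := (aux_shift_int μ σ s hσ hs).const_mul k
    refine this.congr (Filter.Eventually.of_forall fun t => ?_)
    ring
  have hT2 : (∫⁻ t in Ioi μ, P {a | t < X a} * ENNReal.ofReal (t ^ s))
      ≤ ENNReal.ofReal (k * (c * G)) := by
    calc (∫⁻ t in Ioi μ, P {a | t < X a} * ENNReal.ofReal (t ^ s))
        ≤ ∫⁻ t in Ioi μ,
            ENNReal.ofReal (k * (Real.exp (-(t - μ) ^ 2 / (2 * σ ^ 2)) * |t| ^ s)) := by
          refine setLIntegral_mono ?_ fun t ht => ?_
          · fun_prop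
          · have htμ : μ < t := ht
            have h1 : P {a | t < X a} ≤ ENNReal.ofReal
                (k * Real.exp (-(t - μ) ^ 2 / (2 * σ ^ 2))) := by
              have h := htail (t - μ) (by linarith)
              simpa using h
            calc P {a | t < X a} * ENNReal.ofReal (t ^ s)
                ≤ ENNReal.ofReal (k * Real.exp (-(t - μ) ^ 2 / (2 * σ ^ 2)))
                  * ENNReal.ofReal (t ^ s) := mul_le_mul_left h1 _
              _ = ENNReal.ofReal (k * Real.exp (-(t - μ) ^ 2 / (2 * σ ^ 2)) * t ^ s) :=
                  (ENNReal.ofReal_mul (by positivity)).symm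
              _ = ENNReal.ofReal (k * (Real.exp (-(t - μ) ^ 2 / (2 * σ ^ 2)) * |t| ^ s)) := by
                  rw [abs_of_pos (hμ.trans htμ)]; ring_nf
      _ ≤ ∫⁻ t, ENNReal.ofReal (k * (Real.exp (-(t - μ) ^ 2 / (2 * σ ^ 2)) * |t| ^ s)) := by
          exact setLIntegral_le_lintegral _ _
      _ = ENNReal.ofReal (∫ t, k * (Real.exp (-(t - μ) ^ 2 / (2 * σ ^ 2)) * |t| ^ s)) := by
          rw [ofReal_integral_eq_lintegral_ofReal hint2
            (Filter.Eventually.of_forall fun t => by positivity)]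
      _ = ENNReal.ofReal (k * (c * G)) := by
          rw [integral_const_mul, hGvol]
  calc ENNReal.ofReal p * ((∫⁻ t in Ioc 0 μ, P {a | t < X a} * ENNReal.ofReal (t ^ s))
        + ∫⁻ t in Ioi μ, P {a | t < X a} * ENNReal.ofReal (t ^ s))
      ≤ ENNReal.ofReal p * (ENNReal.ofReal (μ ^ p / p) + ENNReal.ofReal (k * (c * G))) :=
        mul_le_mul_right (add_le_add hT1 hT2) _
    _ = ENNReal.ofReal (p * (μ ^ p / p + k * (c * G))) := by
        rw [← ENNReal.ofReal_add (by positivity) (by positivity), ← ENNReal.ofReal_mul hp0.le]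
    _ = ENNReal.ofReal (μ ^ p + p * k * Real.sqrt (2 * Real.pi) * σ * G) := by
        congr 1
        rw [hcdef]
        field_simp
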